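/- Let k be a field and u, v ∈ k. If (X₀,X₁,X₂,X₃) ∈ k⁴ satisfies the equations of Q₁ (namely X₃² + X₁X₃ = (X₀ + uX₁ − vX₂)X₁ and X₁² = X₀X₂), then the triple (X, Y, Z) = (X₀, X₁ + 2X₃, X₂) satisfies the quartic equation of D₁: (Y² − (4u+1)XZ)² = 16XZ(X − vZ)²; that is, the linear projection (X₀:X₁:X₂:X₃) ↦ (X₀ : X₁+2X₃ : X₂) maps Q₁ onto the singular quartic plane curve D₁. -/
import Mathlib

/-- The linear projection `(X₀:X₁:X₂:X₃) ↦ (X₀ : X₁+2X₃ : X₂)` maps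
points of `Q₁` to points of the singular quartic plane curve
`D₁ : (Y² − (4u+1)XZ)² = 16XZ(X − vZ)²`. -/
theorem projection_Q1_to_D1 {k : Type*} [Field k] (u v : k)
    (X₀ X₁ X₂ X₃ : k)
    (h1 : X₃ ^ 2 + X₁ * X₃ = (X₀ + u * X₁ - v * X₂) * X₁)
    (h2 : X₁ ^ 2 = X₀ * X₂) :
    (let X := X₀
     let Y := X₁ + 2 * X₃
     let Z := X₂
     (Y ^ 2 - (4 * u + 1) * X * Z) ^ 2 =
       16 * X * Z * (X - v * Z) ^ 2) := by
  simp only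
  linear_combination (((X₁ + 2*X₃)^2 - (4*u+1)*X₀*X₂ + 4*X₁*(X₀ - v*X₂)))
      * (4*h1 + (4*u+1)*h2) + 16*(X₀ - v*X₂)^2 * h2
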